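/- Let x and y be reduced words over the vertex set of a simplicial graph. If the concatenation of the reversal of x with y is not reduced, then x has an equivalent rearrangement beginning with some vertex v and y has an equivalent rearrangement beginning with the same vertex v. -/

import Mathlib

/-- One-step moves on words over the vertex set of a simplicial graph:
deleting one of two adjacent equal letters, or swapping two adjacent letters
joined by an edge. -/
inductive WordStep {V : Type*} (G : SimpleGraph V) : List V → List V → Prop
  | del (l r : List V) (a : V) : WordStep G (l ++ a :: a :: r) (l ++ a :: r)
  | swap (l r : List V) (a b : V) (h : G.Adj a b) :
      WordStep G (l ++ a :: b :: r) (l ++ b :: a :: r)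

/-- The equivalence relation on words generated by the moves. -/
def WordEquiv {V : Type*} (G : SimpleGraph V) : List V → List V → Prop :=
  Relation.EqvGen (WordStep G)

/-- A word is reduced if whenever two occurrences of the same vertex appear,
some vertex not adjacent to it lies strictly between them. -/
def IsReducedWord {V : Type*} (G : SimpleGraph V) (w : List V) : Prop :=
  ∀ k l : Fin w.length, (k : ℕ) < (l : ℕ) → w.get k = w.get l →
    ∃ p : Fin w.length, (k : ℕ) < (p : ℕ) ∧ (p : ℕ) < (l : ℕ) ∧ ¬ G.Adj (w.get k) (w.get p)


section Helpers

variable {V : Type*} {G : SimpleGraph V}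

lemma wordStep_cons {l1 l2 : List V} (a : V) (h : WordStep G l1 l2) :
    WordStep G (a :: l1) (a :: l2) := by
  cases h with
  | del l r b => exact WordStep.del (a :: l) r b
  | swap l r b c hbc => exact WordStep.swap (a :: l) r b c hbc

lemma wordEquiv_cons {l1 l2 : List V} (a : V) (h : WordEquiv G l1 l2) :
    WordEquiv G (a :: l1) (a :: l2) := by
  induction h with
  | rel _ _ h => exact Relation.EqvGen.rel _ _ (wordStep_cons a h)
  | refl _ => exact Relation.EqvGen.refl _
  | symm _ _ _ ih => exact Relation.EqvGen.symm _ _ ih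
  | trans _ _ _ _ _ ih1 ih2 => exact Relation.EqvGen.trans _ _ _ ih1 ih2

lemma bubble (v : V) (l r : List V) (hadj : ∀ u ∈ l, G.Adj v u) :
    WordEquiv G (l ++ v :: r) (v :: (l ++ r)) := by
  induction l with
  | nil => exact Relation.EqvGen.refl _
  | cons a l ih =>
    have h1 : WordEquiv G (a :: (l ++ v :: r)) (a :: v :: (l ++ r)) :=
      wordEquiv_cons a (ih fun u hu => hadj u (List.mem_cons_of_mem _ hu))
    have h2 : WordStep G ([] ++ a :: v :: (l ++ r)) ([] ++ v :: a :: (l ++ r)) :=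
      WordStep.swap [] (l ++ r) a v (hadj a List.mem_cons_self).symm
    exact Relation.EqvGen.trans _ _ _ h1 (Relation.EqvGen.rel _ _ h2)

lemma not_reduced_of_decomp (a b c : List V) (v : V) (hb : ∀ u ∈ b, G.Adj v u) :
    ¬ IsReducedWord G (a ++ v :: b ++ v :: c) := by
  intro hred
  have hlen : (a ++ v :: b ++ v :: c).length = a.length + b.length + c.length + 2 := by
    simp; omega
  have hk : a.length < (a ++ v :: b ++ v :: c).length := by omega
  have hl : a.length + b.length + 1 < (a ++ v :: b ++ v :: c).length := by omega
  have hgk : (a ++ v :: b ++ v :: c)[a.length]'hk = v := by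
    rw [List.getElem_append_left (by simp : a.length < (a ++ v :: b).length),
      List.getElem_append_right (le_refl _)]
    simp
  have hgl : (a ++ v :: b ++ v :: c)[a.length + b.length + 1]'hl = v := by
    rw [List.getElem_append_right (by simp; omega : (a ++ v :: b).length ≤ a.length + b.length + 1)]
    have h0 : ∀ j (hj : j < (v :: c).length), j = 0 → (v :: c)[j]'hj = v := by
      rintro j hj rfl; rfl
    exact h0 _ _ (by simp)
  obtain ⟨p, hp1, hp2, hp3⟩ := hred ⟨a.length, hk⟩ ⟨a.length + b.length + 1, hl⟩
    (by simp)
    (by simp only [List.get_eq_getElem]; rw [hgk, hgl])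
  apply hp3
  simp only [List.get_eq_getElem, hgk]
  simp only at hp1 hp2
  have hmem : (a ++ v :: b ++ v :: c)[(p:ℕ)] ∈ b := by
    rw [List.getElem_append_left (by simp; omega : (p:ℕ) < (a ++ v :: b).length),
      List.getElem_append_right (by omega : a.length ≤ (p:ℕ))]
    have h1 : (p:ℕ) - a.length = ((p:ℕ) - a.length - 1) + 1 := by omega
    have h2 : ∀ (hh : (p:ℕ) - a.length < (v :: b).length),
        (v :: b)[(p:ℕ) - a.length]'hh ∈ b := by
      rw [h1]
      intro hh
      rw [List.getElem_cons_succ]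
      exact List.getElem_mem _
    exact h2 _
  exact hb _ hmem

lemma decomp_of_not_reduced {w : List V} (h : ¬ IsReducedWord G w) :
    ∃ (a b c : List V) (v : V), w = a ++ v :: b ++ v :: c ∧ ∀ u ∈ b, G.Adj v u := by
  unfold IsReducedWord at h
  push_neg at h
  obtain ⟨k, l, hkl, heq, hbet⟩ := h
  refine ⟨w.take k, (w.drop (k+1)).take (l - (k+1)), w.drop (l+1), w.get k, ?_, ?_⟩
  · have h1 : w = w.take (k:ℕ) ++ w.drop (k:ℕ) := (List.take_append_drop _ _).symm
    have h2 : w.drop (k:ℕ) = w[(k:ℕ)] :: w.drop ((k:ℕ)+1) := List.drop_eq_getElem_cons k.isLt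
    have h3 : w.drop ((k:ℕ)+1) =
        (w.drop ((k:ℕ)+1)).take ((l:ℕ) - ((k:ℕ)+1)) ++ (w.drop ((k:ℕ)+1)).drop ((l:ℕ) - ((k:ℕ)+1)) :=
      (List.take_append_drop _ _).symm
    have h4 : (w.drop ((k:ℕ)+1)).drop ((l:ℕ) - ((k:ℕ)+1)) = w.drop (l:ℕ) := by
      rw [List.drop_drop]; congr 1; omega
    have h5 : w.drop (l:ℕ) = w[(k:ℕ)] :: w.drop ((l:ℕ)+1) := by
      rw [List.drop_eq_getElem_cons l.isLt]
      congr 1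
      simpa [List.get_eq_getElem] using heq.symm
    conv_lhs => rw [h1, h2, h3, h4, h5]
    simp [List.get_eq_getElem]
  · intro u hu
    obtain ⟨i, hi, rfl⟩ := List.getElem_of_mem hu
    have hilen : i < (l:ℕ) - ((k:ℕ)+1) := by
      have := hi; simp at this; omega
    have e1 : ((w.drop ((k:ℕ)+1)).take ((l:ℕ)-((k:ℕ)+1)))[i] =
        w[(k:ℕ)+1+i]'(by have := l.isLt; omega) := by
      rw [List.getElem_take, List.getElem_drop]
    rw [e1]
    have := hbet ⟨(k:ℕ)+1+i, by have := l.isLt; omega⟩ (by simp; omega) (by simp; omega)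
    simpa [List.get_eq_getElem] using this

lemma reduced_reverse {w : List V} (h : IsReducedWord G w) : IsReducedWord G w.reverse := by
  by_contra hc
  obtain ⟨a, b, c, v, hw, hb⟩ := decomp_of_not_reduced hc
  have : w = c.reverse ++ v :: b.reverse ++ v :: a.reverse := by
    have := congrArg List.reverse hw
    simpa using this
  exact not_reduced_of_decomp c.reverse b.reverse a.reverse v
    (fun u hu => hb u (by simpa using hu)) (this ▸ h)

end Helpers

/-- If `x` and `y` are reduced words and the concatenation of the reversal of
`x` with `y` is not reduced, then `x` and `y` admit equivalent rearrangements
beginning with a common vertex. -/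
theorem not_reduced_concat_common_first_letter {V : Type*} (G : SimpleGraph V)
    (x y : List V) (hx : IsReducedWord G x) (hy : IsReducedWord G y)
    (h : ¬ IsReducedWord G (x.reverse ++ y)) :
    ∃ (v : V) (x₂ y₂ : List V), WordEquiv G x (v :: x₂) ∧ WordEquiv G y (v :: y₂) := by
  obtain ⟨a, b, c, v, hw, hb⟩ := decomp_of_not_reduced h
  have hw' : x.reverse ++ y = a ++ (v :: (b ++ v :: c)) := by rw [hw]; simp
  rcases List.append_eq_append_iff.mp hw' with ⟨a', ha1, ha2⟩ | ⟨t, ht1, ht2⟩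
  · have hy' : y = a' ++ v :: b ++ v :: c := by rw [ha2]; simp
    exact absurd hy (hy' ▸ not_reduced_of_decomp a' b c v hb)
  · cases t with
    | nil =>
      have hy' : y = [] ++ v :: b ++ v :: c := by
        have : y = v :: (b ++ v :: c) := by simpa using ht2.symm
        rw [this]; simp
      exact absurd hy (hy' ▸ not_reduced_of_decomp [] b c v hb)
    | cons u t' =>
      rw [List.cons_append] at ht2
      injection ht2 with huv ht2'
      subst huv
      rcases List.append_eq_append_iff.mp ht2'.symm with ⟨s, hs1, hs2⟩ | ⟨s, hs1, hs2⟩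
      · -- hs1 : b = t' ++ s, hs2 : y = s ++ v :: c  (main case)
        have hxeq : x = t'.reverse ++ v :: a.reverse := by
          have := congrArg List.reverse ht1
          simpa using this
        refine ⟨v, t'.reverse ++ a.reverse, s ++ c, ?_, ?_⟩
        · rw [hxeq]
          refine bubble v _ _ (fun u hu => hb u ?_)
          rw [hs1]
          exact List.mem_append_left _ (by simpa using hu)
        · rw [hs2]
          refine bubble v _ _ (fun u hu => hb u ?_)
          rw [hs1]
          exact List.mem_append_right _ hu
      · -- hs1 : t' = b ++ s, hs2 : v :: c = s ++ y
        cases s with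
        | nil =>
          have hyeq : y = v :: c := by simpa using hs2.symm
          have hxrev : x.reverse = a ++ v :: b := by rw [ht1, hs1]; simp
          have hxeq : x = b.reverse ++ v :: a.reverse := by
            have := congrArg List.reverse hxrev
            simpa using this
          refine ⟨v, b.reverse ++ a.reverse, c, ?_, ?_⟩
          · rw [hxeq]
            exact bubble v _ _ (fun u hu => hb u (by simpa using hu))
          · rw [hyeq]
            exact Relation.EqvGen.refl _
        | cons u' s' =>
          rw [List.cons_append] at hs2
          injection hs2 with huv' hs2'
          subst huv'
          have hxrev : x.reverse = a ++ v :: b ++ v :: s' := by rw [ht1, hs1]; simp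
          exact absurd (reduced_reverse hx) (hxrev ▸ not_reduced_of_decomp a b s' v hb)
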